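/- Let l ≥ 1, let n₁, …, n_l be positive integers and a₁, …, a_l ∈ {1, −1}. Then in ℚ⟦t⟧, exp(∑_{m≥1} (1/m) (∏_{i=1}^{l} (1 + (−1)^{n_i} a_i^m)) t^m) = (1 − t)^α (1 + t)^β, where α = −1 + ∑_{S} (−1)^{(∑_{i∈S} n_i) − 1} with the sum over nonempty S ⊆ {1,…,l} with ∏_{i∈S} a_i = 1, and β = ∑_{S} (−1)^{(∑_{i∈S} n_i) − 1} with the sum over nonempty S ⊆ {1,…,l} with ∏_{i∈S} a_i = −1 (negative exponents denote inverses of the corresponding units of ℚ⟦t⟧). -/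

import Mathlib

open PowerSeries Finset

/-- Formal exponential of a power series (the genuine exponential composition when the
constant coefficient of `g` is zero). -/
noncomputable def psExp (g : PowerSeries ℚ) : PowerSeries ℚ :=
  PowerSeries.mk fun n =>
    PowerSeries.coeff (R := ℚ) n (∑ k ∈ Finset.range (n + 1), (k.factorial : ℚ)⁻¹ • g ^ k)

/-- Integer power of a power series: for a negative exponent we take the corresponding
power of the formal inverse (which is the genuine inverse when `f` is a unit). -/
noncomputable def psZpow (f : PowerSeries ℚ) (k : ℤ) : PowerSeries ℚ :=
  if 0 ≤ k then f ^ k.toNat else f⁻¹ ^ (-k).toNat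

lemma coeff_pow_zero {g : PowerSeries ℚ} (hg : constantCoeff g = 0)
    {m k : ℕ} (h : m < k) : coeff m (g ^ k) = 0 := by
  have h1 : (X : PowerSeries ℚ) ∣ g := X_dvd_iff.mpr hg
  have h2 : (X : PowerSeries ℚ) ^ k ∣ g ^ k := pow_dvd_pow_of_dvd h1 k
  exact X_pow_dvd_iff.mp h2 m h

lemma coeff_psExp_stable {g : PowerSeries ℚ} (hg : constantCoeff g = 0)
    {m K : ℕ} (h : m < K) :
    coeff m (psExp g) =
      coeff m (∑ k ∈ Finset.range K, ((k.factorial : ℚ)⁻¹ • g ^ k)) := by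
  simp only [psExp, coeff_mk, map_sum]
  apply Finset.sum_subset (Finset.range_subset_range.mpr h)
  intro k _ hk'
  simp only [Finset.mem_range, not_lt] at hk'
  have : m < k := lt_of_lt_of_le (Nat.lt_succ_self m) (by omega)
  simp [coeff_smul, coeff_pow_zero hg this]

lemma constantCoeff_psExp (g : PowerSeries ℚ) : constantCoeff (psExp g) = 1 := by
  rw [← coeff_zero_eq_constantCoeff_apply]
  simp [psExp]

lemma derivative_psExp {g : PowerSeries ℚ} (hg : constantCoeff g = 0) :
    d⁄dX ℚ (psExp g) = d⁄dX ℚ g * psExp g := by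
  ext m
  set S : PowerSeries ℚ := ∑ k ∈ Finset.range (m + 2), ((k.factorial : ℚ)⁻¹ • g ^ k) with hS
  have h1 : coeff m (d⁄dX ℚ (psExp g)) = coeff m (d⁄dX ℚ S) := by
    rw [coeff_derivative, coeff_derivative, coeff_psExp_stable hg (Nat.lt_succ_self (m+1))]
  have h2 : d⁄dX ℚ S = d⁄dX ℚ g * ∑ k ∈ Finset.range (m + 1), ((k.factorial : ℚ)⁻¹ • g ^ k) := by
    rw [hS, map_sum, Finset.sum_range_succ']
    have : ∀ k : ℕ, d⁄dX ℚ ((((k+1).factorial : ℚ)⁻¹ • g ^ (k+1))) =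
        (k.factorial : ℚ)⁻¹ • (d⁄dX ℚ g * g ^ k) := by
      intro k
      have hfac : (k.factorial : ℚ) ≠ 0 := Nat.cast_ne_zero.mpr (Nat.factorial_ne_zero k)
      have hc : (((k+1).factorial : ℚ))⁻¹ * ((k:ℚ)+1) = ((k.factorial : ℚ))⁻¹ := by
        rw [Nat.factorial_succ]
        push_cast
        field_simp
      rw [Derivation.map_smul, Derivation.leibniz_pow, Nat.add_sub_cancel, smul_eq_mul,
        ← Nat.cast_smul_eq_nsmul ℚ (k+1), smul_smul]
      push_cast
      rw [hc, mul_comm (g ^ k) _]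
    simp only [this]
    rw [Derivation.map_smul, pow_zero, Derivation.map_one_eq_zero, smul_zero, add_zero,
      Finset.mul_sum]
    exact Finset.sum_congr rfl fun k _ => (mul_smul_comm _ _ _).symm
  rw [h1, h2, coeff_mul, coeff_mul]
  apply Finset.sum_congr rfl
  intro p hp
  congr 1
  rw [coeff_psExp_stable hg (K := m + 1)]
  have := Finset.HasAntidiagonal.mem_antidiagonal.mp hp
  omega

lemma ode_unique {f₁ f₂ h : PowerSeries ℚ}
    (h0 : constantCoeff f₁ = constantCoeff f₂)
    (h1 : d⁄dX ℚ f₁ = h * f₁) (h2 : d⁄dX ℚ f₂ = h * f₂) : f₁ = f₂ := by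
  ext m
  induction m using Nat.strong_induction_on with
  | _ m ih =>
    match m with
    | 0 => simpa [coeff_zero_eq_constantCoeff] using h0
    | m + 1 =>
      have e1 : coeff (m+1) f₁ * (m+1) = coeff m (h * f₁) := by
        rw [← coeff_derivative, h1]
      have e2 : coeff (m+1) f₂ * (m+1) = coeff m (h * f₂) := by
        rw [← coeff_derivative, h2]
      have e3 : coeff m (h * f₁) = coeff m (h * f₂) := by
        rw [coeff_mul, coeff_mul]
        apply Finset.sum_congr rfl
        intro p hp
        have := Finset.HasAntidiagonal.mem_antidiagonal.mp hp
        rw [ih p.2 (by omega)]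
      have := e1.trans (e3.trans e2.symm)
      exact mul_right_cancel₀ (by positivity : ((m:ℚ)+1) ≠ 0) this

lemma psZpow_eq_units (f : PowerSeries ℚ) (h : constantCoeff f ≠ 0) (k : ℤ) :
    psZpow f k = ((⟨f, f⁻¹, PowerSeries.mul_inv_cancel f h, PowerSeries.inv_mul_cancel f h⟩ :
      (PowerSeries ℚ)ˣ) ^ k : (PowerSeries ℚ)ˣ) := by
  set U : (PowerSeries ℚ)ˣ :=
    ⟨f, f⁻¹, PowerSeries.mul_inv_cancel f h, PowerSeries.inv_mul_cancel f h⟩ with hU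
  rcases le_or_gt 0 k with hk | hk
  · rw [psZpow, if_pos hk]
    obtain ⟨m, rfl⟩ : ∃ m : ℕ, k = m := ⟨k.toNat, (Int.toNat_of_nonneg hk).symm⟩
    rw [zpow_natCast, Units.val_pow_eq_pow_val, Int.toNat_natCast]
  · rw [psZpow, if_neg (not_le.mpr hk)]
    obtain ⟨m, rfl⟩ : ∃ m : ℕ, k = -m := ⟨(-k).toNat, by omega⟩
    rw [zpow_neg, zpow_natCast, ← inv_pow, Units.val_pow_eq_pow_val, neg_neg, Int.toNat_natCast]
    rfl

lemma derivative_units_zpow (U : (PowerSeries ℚ)ˣ) (k : ℤ) :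
    d⁄dX ℚ ((U ^ k : (PowerSeries ℚ)ˣ) : PowerSeries ℚ) =
      k • (d⁄dX ℚ (U : PowerSeries ℚ) * ((U ^ (k - 1) : (PowerSeries ℚ)ˣ) : PowerSeries ℚ)) := by
  induction k using Int.induction_on with
  | zero => simp
  | succ k ih =>
    have hz : ((k : ℤ) + 1) - 1 = k := by ring
    rw [zpow_add_one, Units.val_mul, Derivation.leibniz, smul_eq_mul, smul_eq_mul, ih, hz]
    have h2 : ((U ^ ((k:ℤ) - 1) : (PowerSeries ℚ)ˣ) : PowerSeries ℚ) * (U : PowerSeries ℚ) =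
        ((U ^ (k:ℤ) : (PowerSeries ℚ)ˣ) : PowerSeries ℚ) := by
      rw [← Units.val_mul, ← zpow_add_one]
      ring_nf
    have h4 : (U : PowerSeries ℚ) * (d⁄dX ℚ (U : PowerSeries ℚ) *
        ((U ^ ((k:ℤ) - 1) : (PowerSeries ℚ)ˣ) : PowerSeries ℚ)) =
        d⁄dX ℚ (U : PowerSeries ℚ) * ((U ^ (k:ℤ) : (PowerSeries ℚ)ˣ) : PowerSeries ℚ) := by
      rw [← h2]; ring
    rw [mul_smul_comm, h4, mul_comm ((U ^ (k:ℤ) : (PowerSeries ℚ)ˣ) : PowerSeries ℚ),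
      add_smul, one_smul, add_comm]
  | pred k ih =>
    have hz : (-(k : ℤ) - 1) - 1 = -(k:ℤ) - 2 := by ring
    rw [zpow_sub_one, Units.val_mul, Derivation.leibniz, smul_eq_mul, smul_eq_mul, ih,
      derivative_inv, hz]
    have hb : ((U⁻¹ : (PowerSeries ℚ)ˣ) : PowerSeries ℚ) *
        (d⁄dX ℚ (U : PowerSeries ℚ) * ((U ^ (-(k:ℤ) - 1) : (PowerSeries ℚ)ˣ) : PowerSeries ℚ)) =
        d⁄dX ℚ (U : PowerSeries ℚ) * ((U ^ (-(k:ℤ) - 2) : (PowerSeries ℚ)ˣ) : PowerSeries ℚ) := by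
      rw [mul_left_comm, ← zpow_neg_one, ← Units.val_mul, ← zpow_add,
        show (-1 + (-(k:ℤ) - 1)) = -(k:ℤ) - 2 from by ring]
    have ha : ((U ^ (-(k:ℤ)) : (PowerSeries ℚ)ˣ) : PowerSeries ℚ) *
        (-((U⁻¹ : (PowerSeries ℚ)ˣ) : PowerSeries ℚ) ^ 2 * d⁄dX ℚ (U : PowerSeries ℚ)) =
        -(d⁄dX ℚ (U : PowerSeries ℚ) * ((U ^ (-(k:ℤ) - 2) : (PowerSeries ℚ)ˣ) : PowerSeries ℚ)) := by
      have hU2 : ((U ^ (-(k:ℤ)) : (PowerSeries ℚ)ˣ) : PowerSeries ℚ) *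
          ((U⁻¹ : (PowerSeries ℚ)ˣ) : PowerSeries ℚ) ^ 2 =
          ((U ^ (-(k:ℤ) - 2) : (PowerSeries ℚ)ˣ) : PowerSeries ℚ) := by
        rw [← Units.val_pow_eq_pow_val, ← zpow_natCast U⁻¹ 2, inv_zpow, ← zpow_neg,
          ← Units.val_mul, ← zpow_add,
          show (-(k:ℤ) + -((2:ℕ):ℤ)) = -(k:ℤ) - 2 from by push_cast; ring]
      calc ((U ^ (-(k:ℤ)) : (PowerSeries ℚ)ˣ) : PowerSeries ℚ) *
          (-((U⁻¹ : (PowerSeries ℚ)ˣ) : PowerSeries ℚ) ^ 2 * d⁄dX ℚ (U : PowerSeries ℚ))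
          = -(((U ^ (-(k:ℤ)) : (PowerSeries ℚ)ˣ) : PowerSeries ℚ) *
            ((U⁻¹ : (PowerSeries ℚ)ˣ) : PowerSeries ℚ) ^ 2 * d⁄dX ℚ (U : PowerSeries ℚ)) := by
            ring
        _ = _ := by rw [hU2]; ring
    rw [ha, mul_smul_comm, hb, sub_smul, one_smul]
    abel

lemma keyL (l : ℕ) (n : Fin l → ℕ) (hn : ∀ i, 0 < n i) (a : Fin l → ℤ)
    (ha : ∀ i, a i = 1 ∨ a i = -1) (m : ℕ) :
    ∏ i, (1 + (-1:ℚ) ^ n i * (a i : ℚ) ^ m) =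
      1 - ((∑ S ∈ ((Finset.univ : Finset (Fin l)).powerset.erase ∅).filter
              (fun S => ∏ i ∈ S, a i = 1), (-1 : ℤ) ^ ((∑ i ∈ S, n i) - 1) : ℤ) : ℚ)
        - ((∑ S ∈ ((Finset.univ : Finset (Fin l)).powerset.erase ∅).filter
              (fun S => ∏ i ∈ S, a i = -1), (-1 : ℤ) ^ ((∑ i ∈ S, n i) - 1) : ℤ) : ℚ)
          * (-1) ^ m := by
  set c : Fin l → ℚ := fun i => (-1:ℚ) ^ n i * (a i : ℚ) ^ m with hc
  set S0 := ((Finset.univ : Finset (Fin l)).powerset.erase ∅) with hS0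
  have hpm1 : ∀ t : Finset (Fin l), ∏ i ∈ t, a i = 1 ∨ ∏ i ∈ t, a i = -1 := by
    intro t
    induction t using Finset.induction_on with
    | empty => simp
    | @insert x s hx ih =>
      rw [Finset.prod_insert hx]
      rcases ha x with h | h <;> rcases ih with h' | h' <;> simp [h, h']
  have expand : ∏ i, (1 + c i)
      = 1 + ∑ t ∈ S0, ∏ i ∈ t, c i := by
    calc ∏ i, (1 + c i) = ∏ i, (c i + 1) := by simp [add_comm]
      _ = ∑ t ∈ (Finset.univ : Finset (Fin l)).powerset,
            (∏ i ∈ t, c i) * ∏ i ∈ Finset.univ \ t, 1 := Finset.prod_add _ _ _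
      _ = ∑ t ∈ (Finset.univ : Finset (Fin l)).powerset, ∏ i ∈ t, c i := by simp
      _ = 1 + ∑ t ∈ S0, ∏ i ∈ t, c i := by
          rw [← Finset.add_sum_erase _ _ (Finset.empty_mem_powerset _), Finset.prod_empty]
  have hterm : ∀ t ∈ S0, ∏ i ∈ t, c i
      = (-1:ℚ) ^ (∑ i ∈ t, n i) * ((∏ i ∈ t, a i : ℤ) : ℚ) ^ m := by
    intro t _
    rw [hc, Finset.prod_mul_distrib, Finset.prod_pow_eq_pow_sum]
    congr 1
    rw [Finset.prod_pow, Int.cast_prod]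
  have hpm : ∀ t ∈ S0, 1 ≤ ∑ i ∈ t, n i := by
    intro t ht
    obtain ⟨i, hi⟩ := Finset.nonempty_of_ne_empty (Finset.ne_of_mem_erase ht)
    calc 1 ≤ n i := hn i
      _ ≤ ∑ i ∈ t, n i := Finset.single_le_sum (fun _ _ => Nat.zero_le _) hi
  have hneg : ∀ t ∈ S0, (-1:ℚ) ^ (∑ i ∈ t, n i) = -(-1:ℚ) ^ ((∑ i ∈ t, n i) - 1) := by
    intro t ht
    have h1 := hpm t ht
    generalize hN : ∑ i ∈ t, n i = N at h1 ⊢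
    obtain ⟨j, rfl⟩ : ∃ j, N = j + 1 := ⟨N - 1, by omega⟩
    rw [Nat.add_sub_cancel, pow_succ]
    ring
  have hsplit : ∑ t ∈ S0, ∏ i ∈ t, c i
      = ∑ t ∈ S0.filter (fun t => ∏ i ∈ t, a i = 1), ∏ i ∈ t, c i
        + ∑ t ∈ S0.filter (fun t => ∏ i ∈ t, a i = -1), ∏ i ∈ t, c i := by
    rw [← Finset.sum_filter_add_sum_filter_not S0 (fun t => ∏ i ∈ t, a i = 1)]
    congr 1
    apply Finset.sum_congr _ (fun _ _ => rfl)
    apply Finset.filter_congr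
    intro t _
    constructor
    · intro h; rcases hpm1 t with h' | h'
      · exact absurd h' h
      · exact h'
    · intro h h'; rw [h] at h'; norm_num at h'
  have hsum1 : ∑ t ∈ S0.filter (fun t => ∏ i ∈ t, a i = 1), ∏ i ∈ t, c i
      = -((∑ S ∈ S0.filter (fun S => ∏ i ∈ S, a i = 1),
          (-1 : ℤ) ^ ((∑ i ∈ S, n i) - 1) : ℤ) : ℚ) := by
    calc ∑ t ∈ S0.filter (fun t => ∏ i ∈ t, a i = 1), ∏ i ∈ t, c i
        = ∑ t ∈ S0.filter (fun t => ∏ i ∈ t, a i = 1),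
            -((-1:ℚ) ^ ((∑ i ∈ t, n i) - 1)) := by
          apply Finset.sum_congr rfl
          intro t ht
          have ht0 : t ∈ S0 := Finset.mem_of_mem_filter _ ht
          have hta : ∏ i ∈ t, a i = 1 := (Finset.mem_filter.mp ht).2
          rw [hterm t ht0, hta, hneg t ht0]
          push_cast
          ring
      _ = _ := by rw [Finset.sum_neg_distrib]; push_cast; rfl
  have hsum2 : ∑ t ∈ S0.filter (fun t => ∏ i ∈ t, a i = -1), ∏ i ∈ t, c i
      = -((∑ S ∈ S0.filter (fun S => ∏ i ∈ S, a i = -1),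
          (-1 : ℤ) ^ ((∑ i ∈ S, n i) - 1) : ℤ) : ℚ) * (-1) ^ m := by
    calc ∑ t ∈ S0.filter (fun t => ∏ i ∈ t, a i = -1), ∏ i ∈ t, c i
        = ∑ t ∈ S0.filter (fun t => ∏ i ∈ t, a i = -1),
            -((-1:ℚ) ^ ((∑ i ∈ t, n i) - 1)) * (-1) ^ m := by
          apply Finset.sum_congr rfl
          intro t ht
          have ht0 : t ∈ S0 := Finset.mem_of_mem_filter _ ht
          have hta : ∏ i ∈ t, a i = -1 := (Finset.mem_filter.mp ht).2
          rw [hterm t ht0, hta, hneg t ht0]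
          push_cast
          ring
      _ = _ := by
          rw [← Finset.sum_mul, Finset.sum_neg_distrib]
          push_cast
          rfl
  rw [expand, hsplit, hsum1, hsum2]
  ring

lemma constantCoeff_units_zpow (U : (PowerSeries ℚ)ˣ)
    (hU : constantCoeff ((U : (PowerSeries ℚ)ˣ) : PowerSeries ℚ) = 1) (k : ℤ) :
    constantCoeff ((U ^ k : (PowerSeries ℚ)ˣ) : PowerSeries ℚ) = 1 := by
  have h1 : (Units.map (constantCoeff (R := ℚ)).toMonoidHom) U = 1 := Units.ext (by simpa using hU)
  calc constantCoeff ((U ^ k : (PowerSeries ℚ)ˣ) : PowerSeries ℚ)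
      = (((Units.map (constantCoeff (R := ℚ)).toMonoidHom) (U ^ k) : ℚˣ) : ℚ) := by
        rw [Units.coe_map]; rfl
    _ = ((((Units.map (constantCoeff (R := ℚ)).toMonoidHom) U) ^ k : ℚˣ) : ℚ) := by rw [map_zpow]
    _ = 1 := by rw [h1, one_zpow, Units.val_one]

/-- The Lefschetz zeta function of a quasi-unipotent map on a product of spheres
(basic eigenvalues `aᵢ = ±1`) is `(1-t)^α (1+t)^β`, where
`α = -1 + ∑_{S : ∏_{i∈S} aᵢ = 1} (-1)^{(∑_{i∈S} nᵢ) - 1}` and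
`β = ∑_{S : ∏_{i∈S} aᵢ = -1} (-1)^{(∑_{i∈S} nᵢ) - 1}`, the sums running over nonempty
subsets `S ⊆ {1,…,l}`. -/
theorem lefschetz_zeta_quasiUnipotent
    (l : ℕ) (hl : 1 ≤ l) (n : Fin l → ℕ) (hn : ∀ i, 0 < n i) (a : Fin l → ℤ)
    (ha : ∀ i, a i = 1 ∨ a i = -1) :
    psExp (PowerSeries.mk fun m =>
        if m = 0 then 0 else (∏ i, (1 + (-1) ^ n i * (a i : ℚ) ^ m)) / m) =
      psZpow (1 - PowerSeries.X)
          (-1 + ∑ S ∈ ((Finset.univ : Finset (Fin l)).powerset.erase ∅).filter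
              (fun S => ∏ i ∈ S, a i = 1), (-1 : ℤ) ^ ((∑ i ∈ S, n i) - 1)) *
        psZpow (1 + PowerSeries.X)
          (∑ S ∈ ((Finset.univ : Finset (Fin l)).powerset.erase ∅).filter
              (fun S => ∏ i ∈ S, a i = -1), (-1 : ℤ) ^ ((∑ i ∈ S, n i) - 1)) := by
  classical
  set g : PowerSeries ℚ := PowerSeries.mk (fun m =>
      if m = 0 then 0 else (∏ i, (1 + (-1) ^ n i * (a i : ℚ) ^ m)) / m) with hgdef
  set A : ℤ := ∑ S ∈ ((Finset.univ : Finset (Fin l)).powerset.erase ∅).filter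
      (fun S => ∏ i ∈ S, a i = 1), (-1 : ℤ) ^ ((∑ i ∈ S, n i) - 1) with hA
  set B : ℤ := ∑ S ∈ ((Finset.univ : Finset (Fin l)).powerset.erase ∅).filter
      (fun S => ∏ i ∈ S, a i = -1), (-1 : ℤ) ^ ((∑ i ∈ S, n i) - 1) with hB
  have hg0 : constantCoeff g = 0 := by
    rw [hgdef, PowerSeries.constantCoeff_mk]
    simp
  have hc1 : constantCoeff (1 - X : PowerSeries ℚ) ≠ 0 := by simp
  have hc2 : constantCoeff (1 + X : PowerSeries ℚ) ≠ 0 := by simp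
  set G1 : PowerSeries ℚ := PowerSeries.mk (fun _ => 1) with hG1def
  set G2 : PowerSeries ℚ := PowerSeries.mk (fun k => (-1:ℚ)^k) with hG2def
  have hm1 : (1 - X : PowerSeries ℚ) * G1 = 1 := by
    ext k
    rw [sub_mul, one_mul, map_sub]
    cases k with
    | zero => simp [hG1def, coeff_zero_X_mul]
    | succ k => simp [hG1def, coeff_succ_X_mul, coeff_one, coeff_mk]
  have hm2 : (1 + X : PowerSeries ℚ) * G2 = 1 := by
    ext k
    rw [add_mul, one_mul, map_add]
    cases k with
    | zero => simp [hG2def, coeff_zero_X_mul]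
    | succ k => simp [hG2def, coeff_succ_X_mul, coeff_one, coeff_mk, pow_succ]
  have hG1inv : G1 = (1 - X : PowerSeries ℚ)⁻¹ :=
    (PowerSeries.eq_inv_iff_mul_eq_one hc1).mpr (by rw [mul_comm]; exact hm1)
  have hG2inv : G2 = (1 + X : PowerSeries ℚ)⁻¹ :=
    (PowerSeries.eq_inv_iff_mul_eq_one hc2).mpr (by rw [mul_comm]; exact hm2)
  rw [psZpow_eq_units _ hc1, psZpow_eq_units _ hc2]
  set U : (PowerSeries ℚ)ˣ := ⟨1 - X, (1 - X : PowerSeries ℚ)⁻¹,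
    PowerSeries.mul_inv_cancel _ hc1, PowerSeries.inv_mul_cancel _ hc1⟩ with hUdef
  set V : (PowerSeries ℚ)ˣ := ⟨1 + X, (1 + X : PowerSeries ℚ)⁻¹,
    PowerSeries.mul_inv_cancel _ hc2, PowerSeries.inv_mul_cancel _ hc2⟩ with hVdef
  set α : ℤ := -1 + A with hα
  have hDg : d⁄dX ℚ g = (((-α : ℤ) : ℚ)) • G1 + ((B : ℤ) : ℚ) • G2 := by
    ext k
    rw [coeff_derivative]
    have hk1 : ((k:ℚ) + 1) ≠ 0 := by positivity
    have hcg : coeff (k+1) g = (∏ i, (1 + (-1:ℚ) ^ n i * (a i : ℚ) ^ (k+1))) / ((k:ℚ)+1) := by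
      rw [hgdef, coeff_mk, if_neg (Nat.succ_ne_zero k)]
      push_cast
      rfl
    rw [hcg, keyL l n hn a ha (k+1), ← hA, ← hB, map_add, coeff_smul, coeff_smul,
      hG1def, hG2def, coeff_mk, coeff_mk]
    push_cast
    field_simp
    rw [Int.cast_add, Int.cast_neg, Int.cast_one]
    ring
  apply ode_unique (h := d⁄dX ℚ g) ?_ (derivative_psExp hg0) ?_
  · rw [constantCoeff_psExp, map_mul,
      constantCoeff_units_zpow U (by rw [hUdef]; simp) α,
      constantCoeff_units_zpow V (by rw [hVdef]; simp) B]
    norm_num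
  · have hDU : d⁄dX ℚ ((U : (PowerSeries ℚ)ˣ) : PowerSeries ℚ) = -1 := by
      show d⁄dX ℚ (1 - X : PowerSeries ℚ) = -1
      simp
    have hDV : d⁄dX ℚ ((V : (PowerSeries ℚ)ˣ) : PowerSeries ℚ) = 1 := by
      show d⁄dX ℚ (1 + X : PowerSeries ℚ) = 1
      simp
    have hU1 : ((1 - X : PowerSeries ℚ))⁻¹ = ((U⁻¹ : (PowerSeries ℚ)ˣ) : PowerSeries ℚ) := rfl
    have hV1 : ((1 + X : PowerSeries ℚ))⁻¹ = ((V⁻¹ : (PowerSeries ℚ)ˣ) : PowerSeries ℚ) := rfl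
    have e1 : G1 * (((U^α : (PowerSeries ℚ)ˣ) : PowerSeries ℚ) * ((V^B : (PowerSeries ℚ)ˣ) : PowerSeries ℚ))
        = ((U^(α-1) : (PowerSeries ℚ)ˣ) : PowerSeries ℚ) * ((V^B : (PowerSeries ℚ)ˣ) : PowerSeries ℚ) := by
      rw [hG1inv, hU1, ← mul_assoc, ← Units.val_mul, mul_comm U⁻¹, ← zpow_sub_one]
    have e2 : G2 * (((U^α : (PowerSeries ℚ)ˣ) : PowerSeries ℚ) * ((V^B : (PowerSeries ℚ)ˣ) : PowerSeries ℚ))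
        = ((U^α : (PowerSeries ℚ)ˣ) : PowerSeries ℚ) * ((V^(B-1) : (PowerSeries ℚ)ˣ) : PowerSeries ℚ) := by
      rw [hG2inv, hV1, mul_left_comm, ← Units.val_mul, mul_comm V⁻¹, ← zpow_sub_one]
    rw [hDg, add_mul, smul_mul_assoc, smul_mul_assoc, e1, e2,
      Int.cast_smul_eq_zsmul, Int.cast_smul_eq_zsmul,
      Derivation.leibniz, smul_eq_mul, smul_eq_mul,
      derivative_units_zpow, derivative_units_zpow, hDU, hDV, one_mul, neg_one_mul,
      mul_smul_comm, mul_smul_comm, mul_neg,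
      mul_comm (((V^B : (PowerSeries ℚ)ˣ) : PowerSeries ℚ))]
    rw [smul_neg, neg_smul, add_comm]
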